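/- arXiv:1402.2628 — 6 statements merged into one kernel-verified Lean document; each statement's English description precedes it below -/
import Mathlib

section
/- Let H ∈ (0,1), γ ∈ (0,1), and d ∈ (0, H/(1−H)). Define σ_d²(s,t) = (t^{2H} + γ² s^{2H} − γ(t^{2H} + s^{2H} − (t−s)^{2H})) / (1 + d(t − γs))² on the triangle A = {(s,t) : 0 ≤ s ≤ t ≤ 1}. Then σ_d² attains its maximum over A at the unique point (0,1); that is, σ_d²(0,1) = 1/(1+d)² and σ_d²(s,t) < 1/(1+d)² for every (s,t) ∈ A with (s,t) ≠ (0,1). -/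
open Set Filter Real

noncomputable section

/-- Weighted concavity of `x ^ b` for `0 ≤ b ≤ 1`. -/
lemma rpow_concave_aux {b β x y : ℝ} (hb0 : 0 ≤ b) (hb1 : b ≤ 1) (hβ0 : 0 ≤ β)
    (hβ1 : β ≤ 1) (hx : 0 ≤ x) (hy : 0 ≤ y) :
    β * x ^ b + (1 - β) * y ^ b ≤ (β * x + (1 - β) * y) ^ b := by
  have h := (Real.concaveOn_rpow hb0 hb1).2 (Set.mem_Ici.2 hx) (Set.mem_Ici.2 hy)
    hβ0 (by linarith : (0:ℝ) ≤ 1 - β) (by ring)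
  simpa [smul_eq_mul] using h

/-- The key structural inequality for the variance numerator. -/
lemma key_ineq {a β p q : ℝ} (ha0 : 0 < a) (ha2 : a < 2) (hβ0 : 0 < β) (hβ1 : β < 1)
    (hp : 0 ≤ p) (hq : 0 < q) :
    β * (p + q) ^ a + (1 - β) * p ^ a < (p + β * q) ^ a + β * (1 - β) * q ^ a := by
  have hqa : (0:ℝ) < q ^ a := Real.rpow_pos_of_pos hq a
  rcases le_or_gt a 1 with ha1 | ha1
  · -- concave case
    have h := rpow_concave_aux ha0.le ha1 hβ0.le hβ1.le
      (by linarith : (0:ℝ) ≤ p + q) hp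
    have hbase : β * (p + q) + (1 - β) * p = p + β * q := by ring
    rw [hbase] at h
    nlinarith [mul_pos (mul_pos hβ0 (by linarith : (0:ℝ) < 1 - β)) hqa]
  · -- convex case `1 < a < 2`: monotonicity argument
    set F : ℝ → ℝ := fun x => (x + β * q) ^ a - β * (x + q) ^ a - (1 - β) * x ^ a with hF
    have hder : ∀ x : ℝ, HasDerivAt F
        (1 * a * (x + β * q) ^ (a - 1) - β * (1 * a * (x + q) ^ (a - 1))
          - (1 - β) * (1 * a * x ^ (a - 1))) x := by
      intro x
      have h1 : HasDerivAt (fun y : ℝ => (y + β * q) ^ a)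
          (1 * a * (x + β * q) ^ (a - 1)) x :=
        ((hasDerivAt_id x).add_const (β * q)).rpow_const (Or.inr ha1.le)
      have h2 : HasDerivAt (fun y : ℝ => β * (y + q) ^ a)
          (β * (1 * a * (x + q) ^ (a - 1))) x :=
        (((hasDerivAt_id x).add_const q).rpow_const (Or.inr ha1.le)).const_mul β
      have h3 : HasDerivAt (fun y : ℝ => (1 - β) * y ^ a)
          ((1 - β) * (1 * a * x ^ (a - 1))) x :=
        ((hasDerivAt_id x).rpow_const (Or.inr ha1.le)).const_mul (1 - β)
      exact (h1.sub h2).sub h3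
    have hmono : MonotoneOn F (Set.Icc 0 p) := by
      apply monotoneOn_of_deriv_nonneg (convex_Icc 0 p)
      · exact fun x _ => (hder x).differentiableAt.continuousAt.continuousWithinAt
      · exact fun x _ => (hder x).differentiableAt.differentiableWithinAt
      · intro x hx
        rw [interior_Icc] at hx
        rw [(hder x).deriv]
        have hcon := rpow_concave_aux (by linarith : (0:ℝ) ≤ a - 1)
          (by linarith : a - 1 ≤ 1) hβ0.le hβ1.le
          (by linarith [hx.1] : (0:ℝ) ≤ x + q) hx.1.le
        have hbase : β * (x + q) + (1 - β) * x = x + β * q := by ring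
        rw [hbase] at hcon
        nlinarith [hcon, ha0]
    have hFp : F 0 ≤ F p := hmono (Set.left_mem_Icc.2 hp) ⟨hp, le_refl p⟩ hp
    have hF0 : F 0 = β ^ a * q ^ a - β * q ^ a := by
      simp only [hF, zero_add, Real.zero_rpow ha0.ne',
        Real.mul_rpow hβ0.le hq.le]
      ring
    have hβa : β ^ (2:ℝ) < β ^ a := Real.rpow_lt_rpow_of_exponent_gt hβ0 hβ1 ha2
    rw [Real.rpow_two] at hβa
    have : (p + β * q) ^ a - β * (p + q) ^ a - (1 - β) * p ^ a
        ≥ β ^ a * q ^ a - β * q ^ a := by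
      rw [← hF0]; exact hFp
    nlinarith [this, hβa, hqa]

/-- Strict version of the denominator bound: for `0 ≤ u < 1`,
`u ^ H * (1 + d) < 1 + d * u`. -/
lemma denom_bound_strict {H d u : ℝ} (hH : H ∈ Ioo (0:ℝ) 1) (hd0 : 0 < d)
    (hd : d < H / (1 - H)) (hu0 : 0 ≤ u) (hu1 : u < 1) :
    u ^ H * (1 + d) < 1 + d * u := by
  have h1H : (0:ℝ) < 1 - H := by linarith [hH.2]
  have hdH : d * (1 - H) < H := (lt_div_iff₀ h1H).1 hd
  set φ : ℝ → ℝ := fun x => 1 + d * x - (1 + d) * x ^ H with hφ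
  have hanti : StrictAntiOn φ (Set.Icc 0 1) := by
    apply strictAntiOn_of_deriv_neg (convex_Icc 0 1)
    · apply ContinuousOn.sub
      · exact (continuousOn_const.add (continuousOn_const.mul continuousOn_id))
      · exact continuousOn_const.mul
          (continuousOn_id.rpow_const (fun x _ => Or.inr hH.1.le))
    · intro x hx
      rw [interior_Icc] at hx
      have hder : HasDerivAt φ (d - (1 + d) * (1 * H * x ^ (H - 1))) x := by
        have h1 : HasDerivAt (fun y : ℝ => 1 + d * y) d x := by
          simpa using ((hasDerivAt_id x).const_mul d).const_add 1
        have h2 : HasDerivAt (fun y : ℝ => (1 + d) * y ^ H)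
            ((1 + d) * (1 * H * x ^ (H - 1))) x :=
          ((hasDerivAt_id x).rpow_const (Or.inl hx.1.ne')).const_mul (1 + d)
        exact h1.sub h2
      rw [hder.deriv]
      have hx1 : (1:ℝ) < x ^ (H - 1) :=
        Real.one_lt_rpow_iff_of_pos hx.1 |>.2 (Or.inr ⟨hx.2, by linarith [hH.2]⟩)
      nlinarith [hx1, hdH, hd0]
  have h := hanti ⟨hu0, hu1.le⟩ (Set.right_mem_Icc.2 zero_le_one) hu1
  simp only [hφ, Real.one_rpow] at h
  linarith [h]

/-- Non-strict version for `u ∈ [0,1]`. -/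
lemma denom_bound {H d u : ℝ} (hH : H ∈ Ioo (0:ℝ) 1) (hd0 : 0 < d)
    (hd : d < H / (1 - H)) (hu0 : 0 ≤ u) (hu1 : u ≤ 1) :
    u ^ H * (1 + d) ≤ 1 + d * u := by
  rcases lt_or_eq_of_le hu1 with h | h
  · exact (denom_bound_strict hH hd0 hd hu0 h).le
  · subst h; simp [Real.one_rpow]

/-- The variance function of the scaled field attains its maximum over the triangle
`A = {(s,t) : 0 ≤ s ≤ t ≤ 1}` at the unique point `(0,1)`. -/
theorem variance_max_at_zero_one (H γ d : ℝ) (hH : H ∈ Ioo (0 : ℝ) 1)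
    (hγ : γ ∈ Ioo (0 : ℝ) 1) (hd : d ∈ Ioo (0 : ℝ) (H / (1 - H))) :
    ((1 : ℝ) ^ (2 * H) + γ ^ 2 * (0 : ℝ) ^ (2 * H) -
        γ * ((1 : ℝ) ^ (2 * H) + (0 : ℝ) ^ (2 * H) - ((1 : ℝ) - 0) ^ (2 * H))) /
      (1 + d * (1 - γ * 0)) ^ 2 = 1 / (1 + d) ^ 2 ∧
    ∀ s t : ℝ, 0 ≤ s → s ≤ t → t ≤ 1 → (s, t) ≠ ((0 : ℝ), (1 : ℝ)) →
      (t ^ (2 * H) + γ ^ 2 * s ^ (2 * H) -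
          γ * (t ^ (2 * H) + s ^ (2 * H) - (t - s) ^ (2 * H))) /
        (1 + d * (t - γ * s)) ^ 2 < 1 / (1 + d) ^ 2 := by
  obtain ⟨hH0, hH1⟩ := hH
  obtain ⟨hγ0, hγ1⟩ := hγ
  obtain ⟨hd0, hd1⟩ := hd
  have h2H : (2 * H) ≠ 0 := by positivity
  have h1d : (0:ℝ) < 1 + d := by linarith
  constructor
  · rw [sub_zero, Real.one_rpow, Real.zero_rpow h2H]
    norm_num
  · intro s t hs hst ht1 hne
    have hu0 : 0 ≤ t - γ * s := by nlinarith
    have hu1 : t - γ * s ≤ 1 := by nlinarith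
    have hden : (0:ℝ) < 1 + d * (t - γ * s) := by nlinarith
    rw [div_lt_div_iff₀ (by positivity) (by positivity)]
    -- it suffices to show N * (1+d)^2 < (1 + d*(t-γs))^2
    have hrw : ∀ u : ℝ, 0 ≤ u → u ^ (2 * H) = (u ^ H) ^ 2 := by
      intro u hu
      rw [mul_comm, Real.rpow_mul hu, Real.rpow_two]
    have hsq : (t - γ * s) ^ (2 * H) * (1 + d) ^ 2 ≤ (1 + d * (t - γ * s)) ^ 2 := by
      have hb := denom_bound ⟨hH0, hH1⟩ hd0 hd1 hu0 hu1
      have hnn : 0 ≤ (t - γ * s) ^ H * (1 + d) := by positivity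
      have := mul_self_le_mul_self hnn hb
      rw [hrw _ hu0]
      nlinarith [this]
    rcases hs.eq_or_lt with hs0 | hs0
    · -- case s = 0
      subst hs0
      have ht : t < 1 := lt_of_le_of_ne ht1 (by
        intro h; exact hne (by rw [h]))
      have ht0 : 0 ≤ t := hst
      simp only [Real.zero_rpow h2H, mul_zero, sub_zero, add_zero]
      have hb := denom_bound_strict ⟨hH0, hH1⟩ hd0 hd1 ht0 ht
      have hnn : 0 ≤ t ^ H * (1 + d) := by positivity
      have hsq' := mul_self_lt_mul_self hnn hb
      rw [hrw t ht0]
      nlinarith [hsq']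
    · -- case s > 0
      have hk := key_ineq (a := 2 * H) (β := 1 - γ) (p := t - s) (q := s)
        (by positivity) (by linarith) (by linarith) (by linarith)
        (by linarith) hs0
      have he1 : t - s + s = t := by ring
      have he2 : t - s + (1 - γ) * s = t - γ * s := by ring
      rw [he1, he2] at hk
      have hNrw : t ^ (2 * H) + γ ^ 2 * s ^ (2 * H) -
          γ * (t ^ (2 * H) + s ^ (2 * H) - (t - s) ^ (2 * H))
          = (1 - γ) * t ^ (2 * H) + (1 - (1 - γ)) * (t - s) ^ (2 * H)
            - (1 - γ) * (1 - (1 - γ)) * s ^ (2 * H) := by ring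
      rw [hNrw]
      have hdd : (0:ℝ) < (1 + d) ^ 2 := by positivity
      have hNU : (1 - γ) * t ^ (2 * H) + (1 - (1 - γ)) * (t - s) ^ (2 * H)
          - (1 - γ) * (1 - (1 - γ)) * s ^ (2 * H) < (t - γ * s) ^ (2 * H) := by
        linarith [hk]
      have := mul_lt_mul_of_pos_right hNU hdd
      linarith [this, hsq]
end
end

section
/- Let H ∈ (0,1), γ ∈ [0,1), and d ∈ (0, H/(1−H)). Define f_d(s) = 1 − γ − (γ − γ²)s^{2H} + γ(1−s)^{2H} − (H/d)(1 + d − dγs)((1−γ)s^{2H−1} + (1−s)^{2H−1}). Then f_d(s) < 0 for every s ∈ (0,1). -/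
open Set Filter Real

noncomputable section

/-- The function `f_d` is negative on `(0,1)` whenever `d ∈ (0, H/(1-H))`. -/
theorem f_d_neg (H γ d : ℝ) (hH : H ∈ Ioo (0 : ℝ) 1) (hγ : γ ∈ Ico (0 : ℝ) 1)
    (hd : d ∈ Ioo (0 : ℝ) (H / (1 - H))) :
    ∀ s ∈ Ioo (0 : ℝ) 1,
      1 - γ - (γ - γ ^ 2) * s ^ (2 * H) + γ * (1 - s) ^ (2 * H) -
        H / d * (1 + d - d * γ * s) *
          ((1 - γ) * s ^ (2 * H - 1) + (1 - s) ^ (2 * H - 1)) < 0 := by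
  obtain ⟨hH0, hH1⟩ := hH
  obtain ⟨hγ0, hγ1⟩ := hγ
  obtain ⟨hd0, hd1⟩ := hd
  intro s hs
  obtain ⟨hs0, hs1⟩ := hs
  have hs1' : 0 < 1 - s := by linarith
  set a := s ^ (2 * H - 1) with ha
  set b := (1 - s) ^ (2 * H - 1) with hb
  have hapos : 0 < a := Real.rpow_pos_of_pos hs0 _
  have hbpos : 0 < b := Real.rpow_pos_of_pos hs1' _
  have hsa : s ^ (2 * H) = a * s := by
    rw [ha, show 2 * H = 2 * H - 1 + 1 by ring, Real.rpow_add hs0, Real.rpow_one]; norm_num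
  have hsb : (1 - s) ^ (2 * H) = b * (1 - s) := by
    rw [hb, show 2 * H = 2 * H - 1 + 1 by ring, Real.rpow_add hs1', Real.rpow_one]; norm_num
  have haa : s ≤ a := by
    have := Real.rpow_le_rpow_of_exponent_ge hs0 hs1.le (by linarith : 2 * H - 1 ≤ 1)
    rwa [Real.rpow_one] at this
  have hbb : 1 - s ≤ b := by
    have := Real.rpow_le_rpow_of_exponent_ge hs1' (by linarith) (by linarith : 2 * H - 1 ≤ 1)
    rwa [Real.rpow_one] at this
  have hab : 1 ≤ a + b := by linarith
  have hHd : 1 - H < H / d := by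
    rw [lt_div_iff₀ hd0]
    have h1H : (0 : ℝ) < 1 - H := by linarith
    have := (lt_div_iff₀ h1H).mp hd1
    nlinarith
  have h1 : 1 - γ * s < H / d * (1 + d - d * γ * s) := by
    have heq : H / d * (1 + d - d * γ * s) = H / d + H - H * γ * s := by
      field_simp
    rw [heq]
    nlinarith [mul_nonneg hγ0 hs0.le]
  have hT : 0 < (1 - γ) * a + b := by nlinarith
  rw [hsa, hsb]
  nlinarith [mul_lt_mul_of_pos_right h1 hT,
    mul_nonneg (by linarith : (0:ℝ) ≤ 1 - γ) (by linarith : (0:ℝ) ≤ a + b - 1)]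
end
end

section
/- Let H ∈ (0,1), γ ∈ [0,1), and d > 0, and define f_d(s) = 1 − γ − (γ − γ²)s^{2H} + γ(1−s)^{2H} − (H/d)(1 + d − dγs)((1−γ)s^{2H−1} + (1−s)^{2H−1}). Then for every s ∈ (0,1), f_d(s) < (1 − H − H/d)((1−s)^{2H−1} + (1−γ)s^{2H−1}) − γ(1−γ)(1−H)s^{2H}. -/
open Set Filter Real

noncomputable section

/-- Upper bound for `f_d` on `(0,1)`. -/
theorem f_d_upper_bound (H γ d : ℝ) (hH : H ∈ Ioo (0 : ℝ) 1) (hγ : γ ∈ Ico (0 : ℝ) 1)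
    (hd : 0 < d) :
    ∀ s ∈ Ioo (0 : ℝ) 1,
      1 - γ - (γ - γ ^ 2) * s ^ (2 * H) + γ * (1 - s) ^ (2 * H) -
          H / d * (1 + d - d * γ * s) *
            ((1 - γ) * s ^ (2 * H - 1) + (1 - s) ^ (2 * H - 1)) <
        (1 - H - H / d) * ((1 - s) ^ (2 * H - 1) + (1 - γ) * s ^ (2 * H - 1)) -
          γ * (1 - γ) * (1 - H) * s ^ (2 * H) := by
  obtain ⟨hH0, hH1⟩ := hH
  obtain ⟨hγ0, hγ1⟩ := hγ
  intro s hs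
  obtain ⟨hs0, hs1⟩ := hs
  have hs' : (0:ℝ) < 1 - s := by linarith
  have hA : 0 < s ^ (2 * H - 1) := Real.rpow_pos_of_pos hs0 _
  have hB : 0 < (1 - s) ^ (2 * H - 1) := Real.rpow_pos_of_pos hs' _
  have hAB : 1 < s ^ (2 * H - 1) + (1 - s) ^ (2 * H - 1) := by
    rcases lt_trichotomy (2 * H - 1) 0 with h | h | h
    · have h1 : 1 < s ^ (2 * H - 1) :=
        Real.one_lt_rpow_of_pos_of_lt_one_of_neg hs0 hs1 h
      linarith
    · simp only [h, Real.rpow_zero]; norm_num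
    · have hlt : 2 * H - 1 < 1 := by linarith
      have h1 : s ^ (1:ℝ) < s ^ (2 * H - 1) :=
        Real.rpow_lt_rpow_of_exponent_gt hs0 hs1 hlt
      have h2 : (1 - s) ^ (1:ℝ) < (1 - s) ^ (2 * H - 1) :=
        Real.rpow_lt_rpow_of_exponent_gt hs' (by linarith) hlt
      rw [Real.rpow_one] at h1 h2
      linarith
  have e1 : s ^ (2 * H) = s ^ (2 * H - 1) * s := by
    rw [show (2 * H) = (2 * H - 1) + 1 by ring, Real.rpow_add hs0, Real.rpow_one]
    norm_num
  have e2 : (1 - s) ^ (2 * H) = (1 - s) ^ (2 * H - 1) * (1 - s) := by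
    rw [show (2 * H) = (2 * H - 1) + 1 by ring, Real.rpow_add hs', Real.rpow_one]
    norm_num
  rw [e1, e2]
  set A := s ^ (2 * H - 1) with hAdef
  set B := (1 - s) ^ (2 * H - 1) with hBdef
  have hd' : d ≠ 0 := ne_of_gt hd
  have key : ((1 - H - H / d) * (B + (1 - γ) * A) - γ * (1 - γ) * (1 - H) * (A * s)) -
      (1 - γ - (γ - γ ^ 2) * (A * s) + γ * (B * (1 - s)) -
        H / d * (1 + d - d * γ * s) * ((1 - γ) * A + B))
      = (1 - γ) * (A + B - 1) + γ * s * (1 - H) * B := by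
    field_simp
    ring
  have h1 : 0 < (1 - γ) * (A + B - 1) := by
    apply mul_pos <;> linarith
  have h2 : 0 ≤ γ * s * (1 - H) * B := mul_nonneg (mul_nonneg (mul_nonneg hγ0 hs0.le) (by linarith)) hB.le
  linarith [key, h1, h2]
end
end

section
/- Let H ∈ (0,1) and d ∈ (0, H/(1−H)]. Then for every t ∈ (0,1), t^{2H}/(1 + dt)² < 1/(1+d)²; equivalently, t^H (1+d) < 1 + dt for all t ∈ (0,1). (This says that the variance σ_d²(0,t) = t^{2H}/(1+dt)² along the boundary line {(0,t) : 0 ≤ t ≤ 1} attains its maximum uniquely at t = 1.) -/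
open Set Filter Real

noncomputable section

/-- The variance `t^{2H}/(1+dt)²` along the boundary line `{(0,t)}` attains its maximum
uniquely at `t = 1`: for `t ∈ (0,1)`, `t^{2H}/(1+dt)² < 1/(1+d)²`;
equivalently `t^H (1+d) < 1 + dt`. -/
theorem boundary_variance_max (H d : ℝ) (hH : H ∈ Ioo (0 : ℝ) 1)
    (hd : d ∈ Ioc (0 : ℝ) (H / (1 - H))) :
    ∀ t ∈ Ioo (0 : ℝ) 1,
      t ^ (2 * H) / (1 + d * t) ^ 2 < 1 / (1 + d) ^ 2 ∧
      t ^ H * (1 + d) < 1 + d * t := by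
  intro t ht
  obtain ⟨ht0, ht1⟩ := ht
  have h1H : (0:ℝ) < 1 - H := by linarith [hH.2]
  have hdle : d * (1 - H) ≤ H := by
    have := hd.2
    rw [le_div_iff₀ h1H] at this
    linarith
  -- strict Bernoulli: t^H = (1 + (t-1))^H < 1 + H*(t-1)
  have hb : t ^ H < 1 + H * (t - 1) := by
    have := rpow_one_add_lt_one_add_mul_self (s := t - 1) (by linarith)
      (by intro h; apply absurd (by linarith : t = 1) (ne_of_lt ht1)) hH.1 hH.2
    simpa using this
  have key : t ^ H * (1 + d) < 1 + d * t := by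
    have h1d : (0:ℝ) < 1 + d := by linarith [hd.1]
    have : t ^ H * (1 + d) < (1 + H * (t - 1)) * (1 + d) :=
      mul_lt_mul_of_pos_right hb h1d
    nlinarith [hd.1]
  refine ⟨?_, key⟩
  have htH : (0:ℝ) < t ^ H := Real.rpow_pos_of_pos ht0 _
  have h2 : t ^ (2 * H) = (t ^ H) ^ 2 := by
    rw [mul_comm, Real.rpow_mul ht0.le]
    norm_num
  have hdt : (0:ℝ) < 1 + d * t := by nlinarith [hd.1]
  have h1d : (0:ℝ) < 1 + d := by linarith [hd.1]
  rw [h2, div_lt_div_iff₀ (by positivity) (by positivity)]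
  nlinarith [pow_lt_pow_left₀ key (by positivity : (0:ℝ) ≤ t ^ H * (1 + d)) two_ne_zero, htH, hdt, h1d]
end
end

section
/- Let H ∈ (0,1), c > 0, x > 0, and let T : (0,∞) → (0,∞) satisfy lim_{u→∞} T_u/u = 0. Define T_x(u) = T_u − x T_u^{2H+1}/u². Then lim_{u→∞} [ ((u + c T_x(u))/T_x(u)^H)² − ((u + c T_u)/T_u^H)² ] = 2Hx. -/
open Set Filter Real

noncomputable section

lemma aux_alg (H c x u t e : ℝ) (hu : 0 < u) (ht : 0 < t) (he : 0 < e) (he1 : e < 1)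
    (hex : x * t ^ (2*H) = e * u^2) :
    ((u + c * (t - x * t ^ (2*H+1) / u^2)) / (t - x * t ^ (2*H+1) / u^2) ^ H) ^ 2
      - ((u + c*t)/t^H)^2
    = x * ((u + c*t)/u)^2 * (((1-e)^(-(2*H)) - 1)/e)
      + (-2*c*x*((u + c*t)/u)*(t/u) + c^2*x^2*((t/u)^(2*H) * u^(2*H-2))*(t/u)^2) * (1-e)^(-(2*H)) := by
  have h1 : 0 < 1 - e := by linarith
  have hP : (0:ℝ) < t ^ (2*H) := rpow_pos_of_pos ht _
  have hQ : (0:ℝ) < (1-e) ^ (2*H) := rpow_pos_of_pos h1 _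
  have hR : (0:ℝ) < u ^ (2*H) := rpow_pos_of_pos hu _
  have hs : t - x * t ^ (2*H+1) / u^2 = t * (1 - e) := by
    have h2 : t ^ (2*H+1) = t ^ (2*H) * t := by
      rw [rpow_add ht, rpow_one]
    rw [h2]
    have key : x * (t ^ (2*H) * t) / u^2 = e * t := by
      rw [div_eq_iff (by positivity), ← mul_assoc, hex]; ring
    rw [key]; ring
  have hsH : (t * (1-e)) ^ H = t ^ H * (1-e) ^ H := mul_rpow ht.le h1.le
  have hPt : (t ^ H)^2 = t ^ (2*H) := by
    rw [sq, ← rpow_add ht]; ring_nf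
  have hQt : ((1-e) ^ H)^2 = (1-e) ^ (2*H) := by
    rw [sq, ← rpow_add h1]; ring_nf
  have hneg : (1-e) ^ (-(2*H)) = ((1-e) ^ (2*H))⁻¹ := rpow_neg h1.le _
  have hdiv : (t/u) ^ (2*H) = t ^ (2*H) / u ^ (2*H) := div_rpow ht.le hu.le _
  have hu2 : u ^ (2*H-2) = u ^ (2*H) / u^2 := by
    rw [rpow_sub hu, rpow_two]
  have hxv : x = e * u^2 / t ^ (2*H) := by
    field_simp
    linarith [hex]
  rw [hs, hsH, hneg, hdiv, hu2, div_pow, div_pow, mul_pow, hPt, hQt, hxv]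
  field_simp
  ring

lemma slope_lim (H : ℝ) :
    Tendsto (fun e : ℝ => ((1-e) ^ (-(2*H)) - 1)/e) (nhdsWithin 0 {0}ᶜ) (nhds (2*H)) := by
  have hd : HasDerivAt (fun e : ℝ => (1-e) ^ (-(2*H))) (2*H) 0 := by
    have h1 : HasDerivAt (fun y : ℝ => y ^ (-(2*H))) ((-(2*H)) * (1:ℝ) ^ (-(2*H)-1)) 1 :=
      Real.hasDerivAt_rpow_const (Or.inl one_ne_zero)
    have h2 : HasDerivAt (fun e : ℝ => 1 - e) (-1 : ℝ) 0 := by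
      exact (hasDerivAt_id' (0:ℝ)).const_sub (1:ℝ)
    have h3 := ((show ((1:ℝ) - 0 = 1) by norm_num) ▸ h1 :
      HasDerivAt (fun y : ℝ => y ^ (-(2*H))) _ ((1:ℝ)-0)).comp (0:ℝ) h2
    have heq : ((-(2*H)) * (1:ℝ) ^ (-(2*H)-1)) * (-1) = 2*H := by
      rw [Real.one_rpow]; ring
    simp only [sub_zero] at h3
    rw [heq] at h3
    exact h3
  have h := hasDerivAt_iff_tendsto_slope.mp hd
  refine h.congr fun e => ?_
  simp [slope_def_field]

/-- The limit identifying the exponential constant `e^{-Hx}` in the short-time-horizon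
approximation of the conditional ruin time. -/
theorem short_horizon_squares_limit (H c x : ℝ) (hH : H ∈ Ioo (0 : ℝ) 1) (hc : 0 < c)
    (hx : 0 < x) (T : ℝ → ℝ) (hT : ∀ u, 0 < u → 0 < T u)
    (hTlim : Tendsto (fun u => T u / u) atTop (nhds 0)) :
    Tendsto (fun u =>
        ((u + c * (T u - x * (T u) ^ (2 * H + 1) / u ^ 2)) /
            (T u - x * (T u) ^ (2 * H + 1) / u ^ 2) ^ H) ^ 2 -
          ((u + c * T u) / (T u) ^ H) ^ 2)
      atTop (nhds (2 * H * x)) := by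
  obtain ⟨hH0, hH1⟩ := hH
  set E : ℝ → ℝ := fun u => x * (T u) ^ (2*H) / u^2 with hE
  have hpow : Tendsto (fun u => (T u / u) ^ (2*H)) atTop (nhds 0) := by
    have hc0 : ContinuousAt (fun y : ℝ => y ^ (2*H)) 0 :=
      Real.continuousAt_rpow_const 0 _ (Or.inr (by linarith))
    have h := hc0.tendsto.comp hTlim
    simpa [Function.comp_def, Real.zero_rpow (by positivity : (2*H) ≠ 0)] using h
  have hupow : Tendsto (fun u : ℝ => u ^ (2*H-2)) atTop (nhds 0) := by
    have h := tendsto_rpow_neg_atTop (by linarith : (0:ℝ) < 2-2*H)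
    refine h.congr fun u => ?_
    norm_num
  have hE0 : Tendsto E atTop (nhds 0) := by
    have h := (hpow.mul hupow).const_mul x
    norm_num at h
    refine Tendsto.congr' ?_ h
    filter_upwards [eventually_gt_atTop (0:ℝ)] with u hu
    have ht := hT u hu
    rw [Real.div_rpow ht.le hu.le, Real.rpow_sub hu, Real.rpow_two]
    have hR : (0:ℝ) < u ^ (2*H) := rpow_pos_of_pos hu _
    simp only [hE]
    field_simp [hE]
    try ring
  have hEpos : ∀ᶠ u in atTop, 0 < E u := by
    filter_upwards [eventually_gt_atTop (0:ℝ)] with u hu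
    have ht := hT u hu
    simp only [hE]
    positivity
  have hElt : ∀ᶠ u in atTop, E u < 1 := by
    have : ∀ᶠ y in nhds (0:ℝ), y < 1 := eventually_lt_nhds (by norm_num)
    exact hE0.eventually this
  have hEne : Tendsto E atTop (nhdsWithin 0 {0}ᶜ) := by
    rw [tendsto_nhdsWithin_iff]
    exact ⟨hE0, hEpos.mono fun u h => ne_of_gt h⟩
  have hψ : Tendsto (fun u => ((1 - E u) ^ (-(2*H)) - 1) / E u) atTop (nhds (2*H)) :=
    (slope_lim H).comp hEne
  have hA : Tendsto (fun u => (u + c * T u)/u) atTop (nhds 1) := by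
    have h : Tendsto (fun u => 1 + c * (T u / u)) atTop (nhds (1 + c*0)) :=
      tendsto_const_nhds.add (hTlim.const_mul c)
    rw [mul_zero, add_zero] at h
    refine Tendsto.congr' ?_ h
    filter_upwards [eventually_gt_atTop (0:ℝ)] with u hu
    field_simp
  have hQ : Tendsto (fun u => (1 - E u) ^ (-(2*H))) atTop (nhds 1) := by
    have hc1 : ContinuousAt (fun e : ℝ => (1-e) ^ (-(2*H))) 0 := by
      have h2 : ContinuousAt (fun e : ℝ => 1 - e) 0 := by fun_prop
      have h1 : ContinuousAt (fun y : ℝ => y ^ (-(2*H))) ((fun e : ℝ => 1 - e) 0) := by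
        simpa using Real.continuousAt_rpow_const 1 (-(2*H)) (Or.inl one_ne_zero)
      exact h1.comp h2
    have h := hc1.tendsto.comp hE0
    simpa [Function.comp_def] using h
  have main : Tendsto (fun u => x * ((u + c*T u)/u)^2 * (((1 - E u) ^ (-(2*H)) - 1)/E u)
      + (-2*c*x*((u + c*T u)/u)*(T u/u)
        + c^2*x^2*((T u/u)^(2*H) * u^(2*H-2))*(T u/u)^2) * (1 - E u) ^ (-(2*H)))
      atTop (nhds (2*H*x)) := by
    have h := (((hA.pow 2).const_mul x).mul hψ).add
      ((((hA.const_mul (-2*c*x)).mul hTlim).add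
        (((hpow.mul hupow).const_mul (c^2*x^2)).mul (hTlim.pow 2))).mul hQ)
    have hval : x * 1^2 * (2*H) + ((-2*c*x)*1*0 + (c^2*x^2)*(0*0)*0^2)*1 = 2*H*x := by ring
    rw [hval] at h
    exact h.congr fun u => by ring
  refine Tendsto.congr' ?_ main
  filter_upwards [eventually_gt_atTop (0:ℝ), hEpos, hElt] with u hu hp hl
  have ht := hT u hu
  have hex : x * (T u) ^ (2*H) = E u * u^2 := by
    simp only [hE]
    field_simp
  exact (aux_alg H c x u (T u) (E u) hu ht hp hl hex).symm
end
end

section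
/- Let H ∈ (0,1), c > 0, x > 0, and let T : (0,∞) → (0,∞) satisfy lim_{u→∞} T_u/u = s_0 ∈ (0, t_0), where t_0 = H/(c(1−H)). Then lim_{u→∞} [ ((u + c(T_u − x u^{2H−1}))/(T_u − x u^{2H−1})^H)² − ((u + c T_u)/T_u^H)² ] = 2λx, where λ = (1 + c s_0)(H − (1−H) c s_0)/s_0^{2H+1}. -/
open Set Filter Real

noncomputable section

/-- The limit identifying the exponential constant `e^{-λx}` in the
intermediate-time-horizon approximation of the conditional ruin time. -/
theorem intermediate_horizon_squares_limit (H c x s₀ : ℝ) (hH : H ∈ Ioo (0 : ℝ) 1)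
    (hc : 0 < c) (hx : 0 < x) (hs₀ : s₀ ∈ Ioo (0 : ℝ) (H / (c * (1 - H))))
    (T : ℝ → ℝ) (hT : ∀ u, 0 < u → 0 < T u)
    (hTlim : Tendsto (fun u => T u / u) atTop (nhds s₀)) :
    Tendsto (fun u =>
        ((u + c * (T u - x * u ^ (2 * H - 1))) / (T u - x * u ^ (2 * H - 1)) ^ H) ^ 2 -
          ((u + c * T u) / (T u) ^ H) ^ 2)
      atTop
      (nhds (2 * ((1 + c * s₀) * (H - (1 - H) * c * s₀) / s₀ ^ (2 * H + 1)) * x)) := by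
  obtain ⟨hH0, hH1⟩ := hH
  obtain ⟨hs0, hs1⟩ := hs₀
  -- the rescaled function and its derivative
  set G : ℝ → ℝ := fun t => (1 + c * t) ^ 2 * t ^ (-(2 * H)) with hGdef
  set g : ℝ → ℝ := fun t =>
    2 * c * (1 + c * t) * t ^ (-(2 * H)) +
      (1 + c * t) ^ 2 * (-(2 * H) * t ^ (-(2 * H) - 1)) with hgdef
  have hderiv : ∀ t : ℝ, 0 < t → HasDerivAt G (g t) t := by
    intro t ht
    have h0 : HasDerivAt (fun t : ℝ => 1 + c * t) c t := by
      simpa using ((hasDerivAt_id t).const_mul c).const_add 1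
    have h1 : HasDerivAt (fun t : ℝ => (1 + c * t) ^ 2) (2 * c * (1 + c * t)) t := by
      have := h0.fun_pow 2
      refine this.congr_deriv ?_
      push_cast
      ring
    have h2 : HasDerivAt (fun t : ℝ => t ^ (-(2 * H))) (-(2 * H) * t ^ (-(2 * H) - 1)) t :=
      Real.hasDerivAt_rpow_const (Or.inl ht.ne')
    exact h1.mul h2
  -- continuity of the derivative at s₀
  have hgc : ContinuousAt g s₀ := by
    have h1 : ContinuousAt (fun t : ℝ => t ^ (-(2 * H))) s₀ :=
      Real.continuousAt_rpow_const _ _ (Or.inl hs0.ne')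
    have h2 : ContinuousAt (fun t : ℝ => t ^ (-(2 * H) - 1)) s₀ :=
      Real.continuousAt_rpow_const _ _ (Or.inl hs0.ne')
    have hA : ContinuousAt (fun t : ℝ => 2 * c * (1 + c * t)) s₀ := by fun_prop
    have hB : ContinuousAt (fun t : ℝ => (1 + c * t) ^ 2) s₀ := by fun_prop
    exact (hA.mul h1).add (hB.mul (continuousAt_const.mul h2))
  -- value of the limit
  have hApos : (0 : ℝ) < s₀ ^ (2 * H + 1) := Real.rpow_pos_of_pos hs0 _
  have e1 : s₀ ^ (-(2 * H)) * s₀ ^ (2 * H + 1) = s₀ := by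
    rw [← Real.rpow_add hs0]
    norm_num
  have e2 : s₀ ^ (-(2 * H) - 1) * s₀ ^ (2 * H + 1) = 1 := by
    rw [← Real.rpow_add hs0]
    norm_num
  have key : -g s₀ * s₀ ^ (2 * H + 1) = 2 * ((1 + c * s₀) * (H - (1 - H) * c * s₀)) := by
    calc -g s₀ * s₀ ^ (2 * H + 1)
        = -(2 * c * (1 + c * s₀)) * (s₀ ^ (-(2 * H)) * s₀ ^ (2 * H + 1)) +
            (2 * H) * (1 + c * s₀) ^ 2 * (s₀ ^ (-(2 * H) - 1) * s₀ ^ (2 * H + 1)) := by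
          simp only [hgdef]; ring
      _ = 2 * ((1 + c * s₀) * (H - (1 - H) * c * s₀)) := by rw [e1, e2]; ring
  have hL : -g s₀ = 2 * ((1 + c * s₀) * (H - (1 - H) * c * s₀) / s₀ ^ (2 * H + 1)) := by
    rw [← mul_div_assoc, eq_div_iff hApos.ne']
    exact key
  -- the auxiliary functions
  set v : ℝ → ℝ := fun u => T u / u with hvdef
  set ε : ℝ → ℝ := fun u => x * u ^ (2 * H - 2) with hεdef
  have heps0 : Tendsto (fun u : ℝ => u ^ (2 * H - 2)) atTop (nhds 0) := by
    have h22 : (0 : ℝ) < 2 - 2 * H := by linarith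
    have := tendsto_rpow_neg_atTop h22
    simpa [show -(2 - 2 * H) = 2 * H - 2 by ring] using this
  have heps : Tendsto ε atTop (nhds 0) := by
    simpa [hεdef] using heps0.const_mul x
  -- the pointwise rescaling identity
  have key2 : ∀ u w : ℝ, 0 < u → 0 < w →
      ((u + c * (u * w)) / (u * w) ^ H) ^ 2 = u ^ (2 - 2 * H) * G w := by
    intro u w hu hw
    have hu2H : (0 : ℝ) < u ^ (2 * H) := Real.rpow_pos_of_pos hu _
    have hw2H : (0 : ℝ) < w ^ (2 * H) := Real.rpow_pos_of_pos hw _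
    have eA : ((u * w) ^ H) ^ 2 = u ^ (2 * H) * w ^ (2 * H) := by
      rw [Real.mul_rpow hu.le hw.le, mul_pow, ← Real.rpow_natCast (u ^ H) 2,
        ← Real.rpow_natCast (w ^ H) 2, ← Real.rpow_mul hu.le, ← Real.rpow_mul hw.le]
      try norm_num [mul_comm]
    have eB : u ^ (2 - 2 * H) = u ^ (2 : ℝ) / u ^ (2 * H) := by
      rw [← Real.rpow_sub hu]
    have eC : w ^ (-(2 * H)) = (w ^ (2 * H))⁻¹ := by
      rw [Real.rpow_neg hw.le]
    have eD : u ^ ((2 : ℝ)) = u ^ (2 : ℕ) := by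
      rw [← Real.rpow_natCast u 2]
      norm_num
    have hne : (u * w) ^ H ≠ 0 := (Real.rpow_pos_of_pos (mul_pos hu hw) _).ne'
    rw [div_pow, eA, eB, eD, hGdef]
    simp only [eC]
    field_simp
  -- the eventual equality
  have hEv : ∀ᶠ u in atTop, 0 < u ∧ s₀ / 2 < v u ∧ 0 < ε u ∧ ε u < s₀ / 4 := by
    have h1 : ∀ᶠ u in atTop, (0 : ℝ) < u := eventually_gt_atTop 0
    have h2 : ∀ᶠ u in atTop, s₀ / 2 < v u :=
      hTlim.eventually (eventually_gt_nhds (by linarith))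
    have h3 : ∀ᶠ u in atTop, ε u < s₀ / 4 :=
      heps.eventually (eventually_lt_nhds (by linarith))
    filter_upwards [h1, h2, h3] with u hu hv2 hε2
    exact ⟨hu, hv2, mul_pos hx (Real.rpow_pos_of_pos hu _), hε2⟩
  have hEq : ∀ᶠ u in atTop,
      ((u + c * (T u - x * u ^ (2 * H - 1))) / (T u - x * u ^ (2 * H - 1)) ^ H) ^ 2 -
          ((u + c * T u) / (T u) ^ H) ^ 2 =
        x * ((G (v u - ε u) - G (v u)) / ε u) := by
    filter_upwards [hEv] with u hu
    obtain ⟨hu0, hv2, hε0, hε2⟩ := hu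
    have hw : 0 < v u - ε u := by linarith
    have hvu : 0 < v u := by linarith
    have hx1 : x * u ^ (2 * H - 1) = ε u * u := by
      have : u ^ (2 * H - 1) = u ^ (2 * H - 2) * u := by
        rw [show (2 * H - 1 : ℝ) = (2 * H - 2) + 1 by ring, Real.rpow_add hu0, Real.rpow_one]
      rw [this, hεdef]
      ring
    have hTu : T u = u * v u := by
      rw [hvdef]
      field_simp
    have hT1 : T u - x * u ^ (2 * H - 1) = u * (v u - ε u) := by
      rw [hx1, hTu]
      ring
    rw [hT1, hTu]
    rw [key2 u (v u - ε u) hu0 hw, key2 u (v u) hu0 hvu]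
    have hεne : ε u ≠ 0 := hε0.ne'
    have huu : u ^ (2 - 2 * H) * ε u = x := by
      rw [hεdef, show (2 - 2 * H : ℝ) = -(2 * H - 2) by ring, Real.rpow_neg hu0.le]
      field_simp
    rw [← huu, mul_assoc, mul_div_cancel₀ _ hεne]; ring
  -- the slope limit via the mean value theorem
  have hslope : Tendsto (fun u => (G (v u - ε u) - G (v u)) / ε u) atTop (nhds (-g s₀)) := by
    rw [Metric.tendsto_nhds]
    intro r hr
    obtain ⟨δ, hδ0, hδ⟩ := Metric.continuousAt_iff.mp hgc r hr
    have h2 : ∀ᶠ u in atTop, |v u - s₀| < min (δ / 2) (s₀ / 2) := by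
      have := Metric.tendsto_nhds.mp hTlim (min (δ / 2) (s₀ / 2))
        (lt_min (by linarith) (by linarith))
      simpa [Real.dist_eq, hvdef] using this
    have h3 : ∀ᶠ u in atTop, ε u < min (δ / 2) (s₀ / 4) :=
      heps.eventually (eventually_lt_nhds (lt_min (by linarith) (by linarith)))
    filter_upwards [hEv, h2, h3] with u hu hv2 hε2
    obtain ⟨hu0, _, hε0, _⟩ := hu
    have hvlow : s₀ - min (δ / 2) (s₀ / 2) < v u := by
      have := abs_lt.mp hv2
      linarith [this.2]
    have hvhigh : v u < s₀ + min (δ / 2) (s₀ / 2) := by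
      have := abs_lt.mp hv2
      linarith [this.1]
    have hmin1 : min (δ / 2) (s₀ / 2) ≤ δ / 2 := min_le_left _ _
    have hmin2 : min (δ / 2) (s₀ / 2) ≤ s₀ / 2 := min_le_right _ _
    have hmin3 : min (δ / 2) (s₀ / 4) ≤ δ / 2 := min_le_left _ _
    have hmin4 : min (δ / 2) (s₀ / 4) ≤ s₀ / 4 := min_le_right _ _
    have ha0 : 0 < v u - ε u := by linarith
    have hab : v u - ε u < v u := by linarith
    obtain ⟨ξ, hξ, hξeq⟩ := exists_hasDerivAt_eq_slope G g hab
      (fun t ht => by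
        have ht0 : 0 < t := lt_of_lt_of_le ha0 ht.1
        exact (hderiv t ht0).continuousAt.continuousWithinAt)
      (fun t ht => hderiv t (lt_trans ha0 ht.1))
    have hξδ : |ξ - s₀| < δ := by
      have h1 := hξ.1
      have h2' := hξ.2
      rw [abs_lt]
      constructor <;> linarith
    have hgξ : dist (g ξ) (g s₀) < r := hδ (by simpa [Real.dist_eq] using hξδ)
    have hval : (G (v u - ε u) - G (v u)) / ε u = -g ξ := by
      rw [hξeq]
      have : v u - (v u - ε u) = ε u := by ring
      rw [this]
      field_simp
      ring
    rw [hval, Real.dist_eq]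
    rw [Real.dist_eq] at hgξ
    have : -g ξ - -g s₀ = -(g ξ - g s₀) := by ring
    rw [this, abs_neg]
    exact hgξ
  -- put everything together
  have hval2 : 2 * ((1 + c * s₀) * (H - (1 - H) * c * s₀) / s₀ ^ (2 * H + 1)) * x
      = x * -g s₀ := by rw [hL]; ring
  rw [hval2]
  exact (hslope.const_mul x).congr' (EventuallyEq.symm hEq)
end
end
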